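/- arXiv:2501.15941 — 2 statements merged into one kernel-verified Lean document; each statement's English description precedes it below -/
import Mathlib

section
/- Let L(w) = (1/n)Σᵢ ℓᵢ(w) with each ℓᵢ twice differentiable and convex with positive definite Hessians, and let ρ ≥ 0. Then for any w ∈ ℝ^p, the ρ-Hessian dissimilarity satisfies τ^ρ(∇²L(w)) ≤ min{n, (M(w)+ρ)/(μ(w)+ρ)}, where M(w) = maxᵢ λ_max(∇²ℓᵢ(w)) and μ(w) = λ_min(∇²L(w)). -/
open Matrix

namespace Matrix.PosSemidef

/-- The positive semidefinite square root, as `Matrix.PosSemidef.sqrt` was defined in Mathlib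
(December 2024); the declaration has since been removed from Mathlib. -/
noncomputable def sqrt {n : Type*} [Fintype n] [DecidableEq n] {A : Matrix n n ℝ}
    (hA : A.PosSemidef) : Matrix n n ℝ :=
  hA.1.eigenvectorUnitary.1 * diagonal ((↑) ∘ (√·) ∘ hA.1.eigenvalues) *
  (star hA.1.eigenvectorUnitary : Matrix n n ℝ)

lemma posSemidef_sqrt {n : Type*} [Fintype n] [DecidableEq n] {A : Matrix n n ℝ}
    (hA : A.PosSemidef) : hA.sqrt.PosSemidef := by
  unfold sqrt
  rw [star_eq_conjTranspose]
  exact (posSemidef_diagonal_iff.mpr fun i => by simp [Real.sqrt_nonneg]).mul_mul_conjTranspose_same _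

lemma sqrt_mul_self {n : Type*} [Fintype n] [DecidableEq n] {A : Matrix n n ℝ}
    (hA : A.PosSemidef) : hA.sqrt * hA.sqrt = A := by
  have hU : (star hA.1.eigenvectorUnitary : Matrix n n ℝ) * hA.1.eigenvectorUnitary.1 = 1 :=
    Unitary.coe_star_mul_self _
  unfold sqrt
  conv_rhs => rw [hA.1.spectral_theorem, Unitary.conjStarAlgAut_apply]
  rw [show ∀ (U D V : Matrix n n ℝ), U * D * V * (U * D * V) = U * (D * (V * U) * D) * V by
    intro U D V; simp only [mul_assoc], hU, mul_one, diagonal_mul_diagonal]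
  congr 3
  funext i
  simp [Real.mul_self_sqrt (hA.eigenvalues_nonneg i)]

end Matrix.PosSemidef

private lemma psd_smul' {m : ℕ} {A : Matrix (Fin m) (Fin m) ℝ} (hA : A.PosSemidef)
    {c : ℝ} (hc : 0 ≤ c) : (c • A).PosSemidef := by
  refine PosSemidef.of_dotProduct_mulVec_nonneg ?_ (fun x => ?_)
  · unfold Matrix.IsHermitian
    rw [conjTranspose_smul, hA.1.eq]
    simp
  · rw [smul_mulVec, dotProduct_smul, smul_eq_mul]
    exact mul_nonneg hc (hA.dotProduct_mulVec_nonneg x)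

private lemma eig_le_of_psd {m : ℕ} {A : Matrix (Fin m) (Fin m) ℝ}
    (hA : A.IsHermitian) {c : ℝ}
    (h : (c • (1 : Matrix (Fin m) (Fin m) ℝ) - A).PosSemidef) (j : Fin m) :
    hA.eigenvalues j ≤ c := by
  set v := hA.eigenvectorBasis j with hv
  have hnorm : dotProduct (star (⇑v)) ⇑v = 1 := by
    have h2 : (inner ℝ v v : ℝ) = 1 := by
      rw [real_inner_self_eq_norm_sq, hA.eigenvectorBasis.orthonormal.1 j]; norm_num
    rw [EuclideanSpace.inner_eq_star_dotProduct] at h2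
    simpa using h2
  have h1 := h.dotProduct_mulVec_nonneg ⇑v
  rw [sub_mulVec, smul_mulVec, one_mulVec, hA.mulVec_eigenvectorBasis,
    dotProduct_sub, dotProduct_smul, dotProduct_smul, hnorm] at h1
  simp only [smul_eq_mul, mul_one] at h1
  linarith

private lemma psd_smul_one_sub {m : ℕ} {A : Matrix (Fin m) (Fin m) ℝ} (hA : A.IsHermitian)
    {c : ℝ} (h : ∀ j, hA.eigenvalues j ≤ c) :
    (c • (1 : Matrix (Fin m) (Fin m) ℝ) - A).PosSemidef := by
  have key : c • (1 : Matrix (Fin m) (Fin m) ℝ) - A =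
      (hA.eigenvectorUnitary : Matrix (Fin m) (Fin m) ℝ) *
        diagonal (fun j => c - hA.eigenvalues j) *
        (hA.eigenvectorUnitary : Matrix (Fin m) (Fin m) ℝ)ᴴ := by
    have hU : (hA.eigenvectorUnitary : Matrix (Fin m) (Fin m) ℝ) *
        star (hA.eigenvectorUnitary : Matrix (Fin m) (Fin m) ℝ) = 1 :=
      (Matrix.mem_unitaryGroup_iff).mp (hA.eigenvectorUnitary).2
    have hd : diagonal (fun j : Fin m => c - hA.eigenvalues j)
        = c • (1 : Matrix (Fin m) (Fin m) ℝ)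
          - diagonal (RCLike.ofReal ∘ hA.eigenvalues) := by
      rw [smul_one_eq_diagonal, ← diagonal_sub]
      congr 1
    rw [star_eq_conjTranspose] at hU
    rw [hd, mul_sub, sub_mul, Matrix.mul_smul, mul_one, Matrix.smul_mul, hU]
    congr 1
    rw [← Matrix.star_eq_conjTranspose]
    have hspec := hA.spectral_theorem
    rw [Unitary.conjStarAlgAut_apply] at hspec
    exact hspec
  rw [key]
  exact (posSemidef_diagonal_iff.mpr fun j => sub_nonneg.mpr (h j)).mul_mul_conjTranspose_same _

private lemma psd_sub_smul_one {m : ℕ} {A : Matrix (Fin m) (Fin m) ℝ} (hA : A.IsHermitian)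
    {c : ℝ} (h : ∀ j, c ≤ hA.eigenvalues j) :
    (A - c • (1 : Matrix (Fin m) (Fin m) ℝ)).PosSemidef := by
  have key : A - c • (1 : Matrix (Fin m) (Fin m) ℝ) =
      (hA.eigenvectorUnitary : Matrix (Fin m) (Fin m) ℝ) *
        diagonal (fun j => hA.eigenvalues j - c) *
        (hA.eigenvectorUnitary : Matrix (Fin m) (Fin m) ℝ)ᴴ := by
    have hU : (hA.eigenvectorUnitary : Matrix (Fin m) (Fin m) ℝ) *
        star (hA.eigenvectorUnitary : Matrix (Fin m) (Fin m) ℝ) = 1 :=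
      (Matrix.mem_unitaryGroup_iff).mp (hA.eigenvectorUnitary).2
    have hd : diagonal (fun j : Fin m => hA.eigenvalues j - c)
        = diagonal (RCLike.ofReal ∘ hA.eigenvalues)
          - c • (1 : Matrix (Fin m) (Fin m) ℝ) := by
      rw [smul_one_eq_diagonal, ← diagonal_sub]
      congr 1
    rw [star_eq_conjTranspose] at hU
    rw [hd, mul_sub, sub_mul, Matrix.mul_smul, mul_one, Matrix.smul_mul, hU]
    congr 1
    rw [← Matrix.star_eq_conjTranspose]
    have hspec := hA.spectral_theorem
    rw [Unitary.conjStarAlgAut_apply] at hspec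
    exact hspec
  rw [key]
  exact (posSemidef_diagonal_iff.mpr fun j => sub_nonneg.mpr (h j)).mul_mul_conjTranspose_same _

/-- The ρ-Hessian dissimilarity is bounded by min{n, (M(w)+ρ)/(μ(w)+ρ)},
where M(w) is the largest eigenvalue among the individual Hessians ∇²ℓᵢ(w) and μ(w) is the
smallest eigenvalue of the averaged Hessian ∇²L(w). -/
theorem rho_hessian_dissimilarity_bound {n p : ℕ} [NeZero n] [NeZero p]
    (ℓH : Fin n → Matrix (Fin p) (Fin p) ℝ)
    (hPD : ∀ i, (ℓH i).PosDef) (ρ : ℝ) (hρ : 0 ≤ ρ)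
    (H : Matrix (Fin p) (Fin p) ℝ) (hH : H = (1 / (n : ℝ)) • ∑ i, ℓH i)
    (hHpd : H.PosDef)
    (hRpd : (H + ρ • (1 : Matrix (Fin p) (Fin p) ℝ)).PosDef)
    (S : Fin n → Matrix (Fin p) (Fin p) ℝ)
    (hS : ∀ i, S i = (hRpd.posSemidef.sqrt)⁻¹ * (ℓH i + ρ • (1 : Matrix (Fin p) (Fin p) ℝ))
        * (hRpd.posSemidef.sqrt)⁻¹)
    (hSHerm : ∀ i, (S i).IsHermitian)
    (Mw μw : ℝ)
    (hMw : Mw = ⨆ i, ⨆ j, (hPD i).1.eigenvalues j)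
    (hμw : μw = ⨅ j, hHpd.1.eigenvalues j) :
    ∀ i j, (hSHerm i).eigenvalues j ≤ min (n : ℝ) ((Mw + ρ) / (μw + ρ)) := by
  intro i j
  set R : Matrix (Fin p) (Fin p) ℝ := H + ρ • (1 : Matrix (Fin p) (Fin p) ℝ) with hR
  set Q : Matrix (Fin p) (Fin p) ℝ := (hRpd.posSemidef.sqrt)⁻¹ with hQdef
  have hsq : hRpd.posSemidef.sqrt * hRpd.posSemidef.sqrt = R := hRpd.posSemidef.sqrt_mul_self
  have hdet : IsUnit (hRpd.posSemidef.sqrt).det := by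
    have hRdet : (0:ℝ) < R.det := hRpd.det_pos
    rw [← hsq, det_mul] at hRdet
    exact isUnit_iff_ne_zero.mpr (fun h0 => by simp [h0] at hRdet)
  have hQherm : Q.IsHermitian := by
    unfold Matrix.IsHermitian
    rw [hQdef, conjTranspose_nonsing_inv, hRpd.posSemidef.posSemidef_sqrt.1.eq]
  have hQRQ : Q * R * Q = 1 := by
    rw [hQdef]
    generalize hgen : hRpd.posSemidef.sqrt = s at hsq hdet
    rw [← hsq, ← mul_assoc, nonsing_inv_mul _ hdet, one_mul,
      mul_nonsing_inv _ hdet]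
  have hconj : ∀ X : Matrix (Fin p) (Fin p) ℝ, X.PosSemidef → (Q * X * Q).PosSemidef := by
    intro X hX
    have := hX.mul_mul_conjTranspose_same Q
    rwa [hQherm.eq] at this
  have hnpos : (0:ℝ) < n := by exact_mod_cast Nat.pos_of_ne_zero (NeZero.ne n)
  have hn1 : (1:ℝ) ≤ n := by exact_mod_cast Nat.one_le_iff_ne_zero.mpr (NeZero.ne n)
  have hμpos : 0 < μw := by
    rw [hμw]
    obtain ⟨j0, hj0⟩ := exists_eq_ciInf_of_finite (f := hHpd.1.eigenvalues)
    rw [← hj0]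
    exact hHpd.eigenvalues_pos j0
  have hMbound : ∀ (k : Fin n) (l : Fin p), (hPD k).1.eigenvalues l ≤ Mw := by
    intro k l
    rw [hMw]
    refine le_trans (le_ciSup (Set.finite_range _).bddAbove l) ?_
    exact le_ciSup (f := fun k' => ⨆ l', (hPD k').1.eigenvalues l')
      (Set.finite_range _).bddAbove k
  have hMpos : 0 < Mw := lt_of_lt_of_le ((hPD i).eigenvalues_pos j) (hMbound i j)
  have hμle : ∀ l, μw ≤ hHpd.1.eigenvalues l := fun l =>
    hμw ▸ ciInf_le (Set.finite_range _).bddBelow l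
  -- Bound 1 : eigenvalues ≤ n
  have hsum : (n:ℝ) • H = ∑ k, ℓH k := by
    rw [hH, smul_smul, mul_one_div, div_self hnpos.ne', one_smul]
  have hD : ((n:ℝ) • R - (ℓH i + ρ • (1 : Matrix (Fin p) (Fin p) ℝ))).PosSemidef := by
    have h1 : (n:ℝ) • R - (ℓH i + ρ • (1 : Matrix (Fin p) (Fin p) ℝ))
        = (∑ k ∈ Finset.univ.erase i, ℓH k)
          + (((n:ℝ) - 1) * ρ) • (1 : Matrix (Fin p) (Fin p) ℝ) := by
      rw [hR, smul_add, hsum, ← Finset.add_sum_erase _ _ (Finset.mem_univ i)]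
      module
    rw [h1]
    refine PosSemidef.add ?_ ?_
    · exact Finset.sum_induction _ _ (fun a b ha hb => ha.add hb) PosSemidef.zero
        (fun k _ => (hPD k).posSemidef)
    · rw [smul_one_eq_diagonal]
      exact posSemidef_diagonal_iff.mpr fun _ =>
        mul_nonneg (by linarith) hρ
  have hb1 : ((n:ℝ) • (1 : Matrix (Fin p) (Fin p) ℝ) - S i).PosSemidef := by
    have hpsd := hconj _ hD
    have he : Q * ((n:ℝ) • R - (ℓH i + ρ • (1 : Matrix (Fin p) (Fin p) ℝ))) * Q
        = (n:ℝ) • (Q * R * Q) - S i := by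
      rw [hS i, mul_sub, sub_mul, Matrix.mul_smul, Matrix.smul_mul]
    rwa [he, hQRQ] at hpsd
  have bound1 := eig_le_of_psd (hSHerm i) hb1 j
  -- Bound 2 : eigenvalues ≤ (Mw + ρ)/(μw + ρ)
  have hMA : (Mw • (1 : Matrix (Fin p) (Fin p) ℝ) - ℓH i).PosSemidef :=
    psd_smul_one_sub (hPD i).1 (hMbound i)
  have hHm : (H - μw • (1 : Matrix (Fin p) (Fin p) ℝ)).PosSemidef :=
    psd_sub_smul_one hHpd.1 hμle
  have step1 : ((Mw + ρ) • (Q * Q) - S i).PosSemidef := by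
    have key : Q * (Mw • (1 : Matrix (Fin p) (Fin p) ℝ) - ℓH i) * Q
        = (Mw + ρ) • (Q * Q) - S i := by
      have hrw : Mw • (1 : Matrix (Fin p) (Fin p) ℝ) - ℓH i
          = (Mw + ρ) • (1 : Matrix (Fin p) (Fin p) ℝ)
            - (ℓH i + ρ • (1 : Matrix (Fin p) (Fin p) ℝ)) := by module
      rw [hrw, hS i, mul_sub, sub_mul, Matrix.mul_smul, Matrix.smul_mul, mul_one]
    have hpsd := hconj _ hMA
    rwa [key] at hpsd
  have step2 : ((1 : Matrix (Fin p) (Fin p) ℝ) - (μw + ρ) • (Q * Q)).PosSemidef := by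
    have key : Q * (H - μw • (1 : Matrix (Fin p) (Fin p) ℝ)) * Q
        = Q * R * Q - (μw + ρ) • (Q * Q) := by
      have hrw : H - μw • (1 : Matrix (Fin p) (Fin p) ℝ)
          = R - (μw + ρ) • (1 : Matrix (Fin p) (Fin p) ℝ) := by rw [hR]; module
      rw [hrw, mul_sub, sub_mul, Matrix.mul_smul, Matrix.smul_mul, mul_one]
    have hpsd := hconj _ hHm
    rw [key, hQRQ] at hpsd
    exact hpsd
  have hμρ : (0:ℝ) < μw + ρ := by linarith
  have hcnonneg : 0 ≤ (Mw + ρ) / (μw + ρ) := div_nonneg (by linarith) hμρ.le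
  have step3 : (((Mw + ρ) / (μw + ρ)) • (1 : Matrix (Fin p) (Fin p) ℝ)
      - (Mw + ρ) • (Q * Q)).PosSemidef := by
    have hpsd := psd_smul' step2 hcnonneg
    rwa [smul_sub, smul_smul, div_mul_cancel₀ _ hμρ.ne'] at hpsd
  have hb2 : (((Mw + ρ) / (μw + ρ)) • (1 : Matrix (Fin p) (Fin p) ℝ) - S i).PosSemidef := by
    have hpsd := step3.add step1
    rwa [sub_add_sub_cancel] at hpsd
  have bound2 := eig_le_of_psd (hSHerm i) hb2 j
  exact le_min bound1 bound2
end

section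
/- Scaled proximal mapping lower bound: Let L be differentiable with (1-ζ)γ_ℓ-lower and (1+ζ)γ_u-upper quadratic regularity in the P-norm, i.e. for all x, y: L(y) ≥ L(x) + ⟨∇L(x), y-x⟩ + ((1-ζ)γ_ℓ/2)‖y-x‖²_P and L(y) ≤ L(x) + ⟨∇L(x), y-x⟩ + ((1+ζ)γ_u/2)‖y-x‖²_P. Let r be convex, 0 < η ≤ 1/((1+ζ)γ_u), w ∈ dom(r), v ∈ ℝ^p arbitrary, w̃ = argmin_{w'} { ηr(w') + ⟨ηv, w'-w⟩ + (1/2)‖w'-w‖²_P }, g_P = (1/η)P(w - w̃), and Δ = v - ∇L(w). Then for all w' ∈ ℝ^p: R(w') ≥ R(w̃) + ⟨g_P, w'-w⟩ + (η/2)‖g_P‖²_{P⁻¹} + ((1-ζ)γ_ℓ/2)‖w'-w‖²_P + ⟨Δ, w̃-w'⟩, where R = L + r. -/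
open Matrix

lemma aux_limit_nonneg (c b : ℝ) (hb : 0 ≤ b)
    (h : ∀ t : ℝ, 0 < t → t ≤ 1 → 0 ≤ t * c + t ^ 2 / 2 * b) : 0 ≤ c := by
  by_contra hc
  push_neg at hc
  have hb1 : 0 < b + 1 := by linarith
  set t := min 1 (-c / (b + 1)) with ht
  have htpos : 0 < t := lt_min one_pos (div_pos (by linarith) hb1)
  have ht1 : t ≤ 1 := min_le_left _ _
  have h2 : t ≤ -c / (b + 1) := min_le_right _ _
  have h3 : t * (b + 1) ≤ -c := by
    calc t * (b + 1) ≤ (-c / (b + 1)) * (b + 1) := by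
          exact mul_le_mul_of_nonneg_right h2 hb1.le
      _ = -c := by field_simp
  have h4 := h t htpos ht1
  nlinarith [mul_pos htpos htpos]

/-- Scaled proximal mapping lower bound (extension of Lemma 3 of Xiao–Zhang
to the preconditioned setting). -/
theorem scaled_prox_lower_bound {p : ℕ} (P : Matrix (Fin p) (Fin p) ℝ) (hP : P.PosDef)
    (L r : (Fin p → ℝ) → ℝ) (gL : (Fin p → ℝ) → (Fin p → ℝ))
    (ζ γl γu η : ℝ) (hη : 0 < η) (hηu : η ≤ 1 / ((1 + ζ) * γu))
    (hlow : ∀ x y, L y ≥ L x + gL x ⬝ᵥ (y - x)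
        + (1 - ζ) * γl / 2 * ((y - x) ⬝ᵥ P.mulVec (y - x)))
    (hup : ∀ x y, L y ≤ L x + gL x ⬝ᵥ (y - x)
        + (1 + ζ) * γu / 2 * ((y - x) ⬝ᵥ P.mulVec (y - x)))
    (hr : ConvexOn ℝ Set.univ r)
    (w v wt : Fin p → ℝ)
    (hargmin : ∀ w', η * r wt + (η • v) ⬝ᵥ (wt - w) + 1 / 2 * ((wt - w) ⬝ᵥ P.mulVec (wt - w))
        ≤ η * r w' + (η • v) ⬝ᵥ (w' - w) + 1 / 2 * ((w' - w) ⬝ᵥ P.mulVec (w' - w))) :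
    ∀ w' : Fin p → ℝ,
      L w' + r w' ≥ L wt + r wt + ((1 / η) • P.mulVec (w - wt)) ⬝ᵥ (w' - w)
        + η / 2 * (((1 / η) • P.mulVec (w - wt)) ⬝ᵥ P⁻¹.mulVec ((1 / η) • P.mulVec (w - wt)))
        + (1 - ζ) * γl / 2 * ((w' - w) ⬝ᵥ P.mulVec (w' - w))
        + (v - gL w) ⬝ᵥ (wt - w') := by
  intro w'
  have hPsd : ∀ x : Fin p → ℝ, 0 ≤ x ⬝ᵥ P.mulVec x := fun x => by
    simpa using hP.posSemidef.dotProduct_mulVec_nonneg x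
  have hsym : ∀ x y : Fin p → ℝ, x ⬝ᵥ P.mulVec y = y ⬝ᵥ P.mulVec x := fun x y => by
    rw [Matrix.dotProduct_mulVec, ← Matrix.mulVec_transpose, dotProduct_comm,
      show Pᵀ = P by simpa using hP.isHermitian.eq]
  have hinv : ∀ x : Fin p → ℝ, P⁻¹.mulVec (P.mulVec x) = x := fun x => by
    rw [Matrix.mulVec_mulVec, Matrix.nonsing_inv_mul _ hP.det_pos.ne'.isUnit, Matrix.one_mulVec]
  -- the gradient vector g and key scalar K
  set g : Fin p → ℝ := (1 / η) • P.mulVec (w - wt) with hg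
  set s : Fin p → ℝ := w - wt with hs
  set d : Fin p → ℝ := w' - wt with hd
  -- K = g ⬝ᵥ s
  have hKs : g ⬝ᵥ s = (1 / η) * (s ⬝ᵥ P.mulVec s) := by
    rw [hg, smul_dotProduct, smul_eq_mul, dotProduct_comm]
  have hKnn : 0 ≤ g ⬝ᵥ s := by
    rw [hKs]; exact mul_nonneg (by positivity) (hPsd s)
  -- P⁻¹ term
  have hPinvterm : g ⬝ᵥ P⁻¹.mulVec g = (1 / η) * (g ⬝ᵥ s) := by
    rw [hg]
    rw [Matrix.mulVec_smul, hinv, dotProduct_smul, smul_eq_mul]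
  -- ‖wt - w‖²_P = η * K
  have hwtw : (wt - w) ⬝ᵥ P.mulVec (wt - w) = η * (g ⬝ᵥ s) := by
    have h1 : wt - w = -s := by rw [hs]; abel
    rw [h1, hKs]
    have : (-s) ⬝ᵥ P.mulVec (-s) = s ⬝ᵥ P.mulVec s := by
      rw [Matrix.mulVec_neg, dotProduct_neg, neg_dotProduct, neg_neg]
    rw [this]
    field_simp
  -- positivity of (1+ζ)γu
  have hγu : 0 < (1 + ζ) * γu := by
    by_contra hcon
    push_neg at hcon
    have : 1 / ((1 + ζ) * γu) ≤ 0 := div_nonpos_of_nonneg_of_nonpos zero_le_one hcon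
    linarith
  have hηγu : η * ((1 + ζ) * γu) ≤ 1 := by
    rw [le_div_iff₀ hγu] at hηu
    linarith
  -- subgradient inequality for r at wt
  have hrkey : r w' ≥ r wt + (g - v) ⬝ᵥ d := by
    have key : 0 ≤ η * (r w' - r wt) + (η • v) ⬝ᵥ d + d ⬝ᵥ P.mulVec (wt - w) := by
      apply aux_limit_nonneg _ (d ⬝ᵥ P.mulVec d) (hPsd d)
      intro t ht0 ht1
      have hconv : r (wt + t • d) ≤ (1 - t) * r wt + t * r w' := by
        have heq : wt + t • d = (1 - t) • wt + t • w' := by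
          funext i
          simp [hd, Pi.smul_apply]
          ring
        rw [heq]
        exact hr.2 (Set.mem_univ wt) (Set.mem_univ w') (by linarith) ht0.le (by ring)
      have harg := hargmin (wt + t • d)
      have hexp1 : (η • v) ⬝ᵥ (wt + t • d - w) = (η • v) ⬝ᵥ (wt - w) + t * ((η • v) ⬝ᵥ d) := by
        have : wt + t • d - w = (wt - w) + t • d := by abel
        rw [this, dotProduct_add, dotProduct_smul, smul_eq_mul]
      have hexp2 : (wt + t • d - w) ⬝ᵥ P.mulVec (wt + t • d - w)
          = (wt - w) ⬝ᵥ P.mulVec (wt - w) + 2 * t * (d ⬝ᵥ P.mulVec (wt - w))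
            + t ^ 2 * (d ⬝ᵥ P.mulVec d) := by
        have h0 : wt + t • d - w = (wt - w) + t • d := by abel
        rw [h0]
        simp only [Matrix.mulVec_add, Matrix.mulVec_smul, dotProduct_add, add_dotProduct,
          smul_dotProduct, dotProduct_smul, smul_eq_mul]
        rw [hsym d (wt - w)]
        ring
      have hη0 : η * r (wt + t • d) ≤ η * ((1 - t) * r wt + t * r w') :=
        mul_le_mul_of_nonneg_left hconv hη.le
      rw [hexp1, hexp2] at harg
      nlinarith [harg, hη0]
    have hgd' : g ⬝ᵥ d = (1 / η) * (d ⬝ᵥ P.mulVec s) := by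
      rw [hg, smul_dotProduct, smul_eq_mul, dotProduct_comm]
    have hPwtw : d ⬝ᵥ P.mulVec (wt - w) = -(η * (g ⬝ᵥ d)) := by
      have h1 : wt - w = -s := by rw [hs]; abel
      rw [h1, Matrix.mulVec_neg, dotProduct_neg, hgd']
      field_simp
    rw [hPwtw, smul_dotProduct, smul_eq_mul] at key
    have : 0 ≤ r w' - r wt + (v ⬝ᵥ d) - (g ⬝ᵥ d) := by
      have := key
      nlinarith
    have hgd : (g - v) ⬝ᵥ d = g ⬝ᵥ d - v ⬝ᵥ d := by rw [sub_dotProduct]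
    linarith [this, hgd.le, hgd.ge]
  -- lower bound for L at w'
  have hL1 := hlow w w'
  -- upper bound for L at wt
  have hL2 := hup w wt
  rw [hwtw] at hL2
  -- combine
  have hgsplit : g ⬝ᵥ d = g ⬝ᵥ (w' - w) + g ⬝ᵥ s := by
    rw [← dotProduct_add]
    congr 1
    rw [hd, hs]; abel
  have hΔ : (v - gL w) ⬝ᵥ (wt - w') = -(v ⬝ᵥ d) + gL w ⬝ᵥ d := by
    have h1 : wt - w' = -d := by rw [hd]; abel
    rw [h1, dotProduct_neg, sub_dotProduct]
    ring
  have hgLd : gL w ⬝ᵥ (w' - w) - gL w ⬝ᵥ (wt - w) = gL w ⬝ᵥ d := by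
    rw [← dotProduct_sub]
    congr 1
    rw [hd]; abel
  have hub : (1 + ζ) * γu / 2 * (η * (g ⬝ᵥ s)) ≤ (g ⬝ᵥ s) / 2 := by
    nlinarith
  have hgv : (g - v) ⬝ᵥ d = g ⬝ᵥ d - v ⬝ᵥ d := sub_dotProduct _ _ _
  have hhalf : η / 2 * (1 / η * (g ⬝ᵥ s)) = (g ⬝ᵥ s) / 2 := by
    field_simp
  rw [hPinvterm]
  linarith [hrkey, hL1, hL2, hgsplit, hΔ, hgLd, hub, hgv, hhalf]
end
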